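/- Let r be a real random variable with P(r ≥ -1) = 1, P(r > 0) > 0, P(r < 0) > 0, and E[(ln(1+r))²] < ∞. Then the function υ_r(f) = Var[ln(1 + f r)] is strictly increasing on the interval (0,1). -/

import Mathlib

open MeasureTheory ProbabilityTheory Real Filter Topology

lemma one_add_mul_pos {a f : ℝ} (ha : -1 ≤ a) (hf0 : 0 ≤ f) (hf1 : f < 1) :
    0 < 1 + f * a := by nlinarith

lemma hasDeriv_phi {a b x : ℝ} (hax : (0:ℝ) < 1 + x * a) (hbx : (0:ℝ) < 1 + x * b) :
    HasDerivAt (fun f => Real.log (1 + f * a) - Real.log (1 + f * b))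
      ((a - b) / ((1 + x * a) * (1 + x * b))) x := by
  have da : HasDerivAt (fun f : ℝ => 1 + f * a) a x := by
    simpa using ((hasDerivAt_id x).mul_const a).const_add 1
  have db : HasDerivAt (fun f : ℝ => 1 + f * b) b x := by
    simpa using ((hasDerivAt_id x).mul_const b).const_add 1
  have h := (da.log hax.ne').sub (db.log hbx.ne')
  rw [show (a - b) / ((1 + x * a) * (1 + x * b)) = a / (1 + x * a) - b / (1 + x * b) by
    rw [div_sub_div _ _ hax.ne' hbx.ne']; ring]
  exact h

lemma phi_strictMono {a b : ℝ} (ha : -1 ≤ a) (hb : -1 ≤ b) (hba : b < a) :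
    StrictMonoOn (fun f => Real.log (1 + f * a) - Real.log (1 + f * b)) (Set.Ico 0 1) := by
  apply strictMonoOn_of_deriv_pos (convex_Ico 0 1)
  · intro x hx
    exact (hasDeriv_phi (one_add_mul_pos ha hx.1 hx.2)
      (one_add_mul_pos hb hx.1 hx.2)).continuousAt.continuousWithinAt
  · intro x hx
    rw [interior_Ico] at hx
    have hax := one_add_mul_pos ha hx.1.le hx.2
    have hbx := one_add_mul_pos hb hx.1.le hx.2
    rw [(hasDeriv_phi hax hbx).deriv]
    exact div_pos (by linarith) (mul_pos hax hbx)

lemma phi_mono {a b : ℝ} (ha : -1 ≤ a) (hb : -1 ≤ b) (hba : b ≤ a) :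
    MonotoneOn (fun f => Real.log (1 + f * a) - Real.log (1 + f * b)) (Set.Ico 0 1) := by
  apply monotoneOn_of_deriv_nonneg (convex_Ico 0 1)
  · intro x hx
    exact (hasDeriv_phi (one_add_mul_pos ha hx.1 hx.2)
      (one_add_mul_pos hb hx.1 hx.2)).continuousAt.continuousWithinAt
  · intro x hx
    rw [interior_Ico] at hx
    exact ((hasDeriv_phi (one_add_mul_pos ha hx.1.le hx.2)
      (one_add_mul_pos hb hx.1.le hx.2)).differentiableAt).differentiableWithinAt
  · intro x hx
    rw [interior_Ico] at hx
    have hax := one_add_mul_pos ha hx.1.le hx.2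
    have hbx := one_add_mul_pos hb hx.1.le hx.2
    rw [(hasDeriv_phi hax hbx).deriv]
    exact div_nonneg (by linarith) (mul_pos hax hbx).le

lemma sq_diff_mono {a b f1 f2 : ℝ} (ha : -1 ≤ a) (hb : -1 ≤ b)
    (h0 : 0 ≤ f1) (h12 : f1 ≤ f2) (h2 : f2 < 1) :
    (Real.log (1 + f1 * a) - Real.log (1 + f1 * b)) ^ 2 ≤
      (Real.log (1 + f2 * a) - Real.log (1 + f2 * b)) ^ 2 := by
  have hm1 : (0:ℝ) ∈ Set.Ico (0:ℝ) 1 := by constructor <;> norm_num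
  have hm2 : f1 ∈ Set.Ico (0:ℝ) 1 := ⟨h0, lt_of_le_of_lt h12 h2⟩
  have hm3 : f2 ∈ Set.Ico (0:ℝ) 1 := ⟨le_trans h0 h12, h2⟩
  rcases le_total b a with hba | hab
  · have hmono := phi_mono ha hb hba
    have h01 := hmono hm1 hm2 h0
    have h12' := hmono hm2 hm3 h12
    dsimp only at h01 h12'
    simp only [zero_mul, add_zero, Real.log_one, sub_self] at h01
    exact pow_le_pow_left₀ (by linarith) h12' 2
  · have hmono := phi_mono hb ha hab
    have h01 := hmono hm1 hm2 h0
    have h12' := hmono hm2 hm3 h12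
    dsimp only at h01 h12'
    simp only [zero_mul, add_zero, Real.log_one, sub_self] at h01
    have key : ∀ x y : ℝ, (x - y) ^ 2 = (y - x) ^ 2 := fun x y => by ring
    rw [key, key (Real.log (1 + f2 * a))]
    exact pow_le_pow_left₀ (by linarith) h12' 2

lemma sq_diff_strict {a b f1 f2 : ℝ} (ha : 0 < a) (hb' : -1 ≤ b) (hb : b < 0)
    (h0 : 0 < f1) (h12 : f1 < f2) (h2 : f2 < 1) :
    (Real.log (1 + f1 * a) - Real.log (1 + f1 * b)) ^ 2 <
      (Real.log (1 + f2 * a) - Real.log (1 + f2 * b)) ^ 2 := by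
  have hm1 : (0:ℝ) ∈ Set.Ico (0:ℝ) 1 := by constructor <;> norm_num
  have hm2 : f1 ∈ Set.Ico (0:ℝ) 1 := ⟨h0.le, lt_trans h12 h2⟩
  have hm3 : f2 ∈ Set.Ico (0:ℝ) 1 := ⟨h0.le.trans h12.le, h2⟩
  have hmono := phi_strictMono (by linarith : (-1:ℝ) ≤ a) hb' (lt_trans hb ha)
  have h01 := hmono hm1 hm2 h0
  have h12' := hmono hm2 hm3 h12
  dsimp only at h01 h12'
  simp only [zero_mul, add_zero, Real.log_one, sub_self] at h01
  exact pow_lt_pow_left₀ h12' (by linarith) (by norm_num)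


lemma memL2_log {Ω : Type*} [MeasurableSpace Ω] (P : Measure Ω) [IsProbabilityMeasure P]
    (r : Ω → ℝ) (hmeas : Measurable r)
    (h1 : ∀ᵐ ω ∂P, -1 ≤ r ω)
    (hsq : Integrable (fun ω => (Real.log (1 + r ω)) ^ 2) P)
    {f : ℝ} (hf0 : 0 ≤ f) (hf1 : f < 1) :
    MemLp (fun ω => Real.log (1 + f * r ω)) 2 P := by
  have hlogmeas : Measurable fun ω => Real.log (1 + r ω) :=
    Real.measurable_log.comp (measurable_const.add hmeas)
  have hL : MemLp (fun ω => Real.log (1 + r ω)) 2 P :=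
    (memLp_two_iff_integrable_sq hlogmeas.aestronglyMeasurable).mpr hsq
  have hg : MemLp (fun ω => |Real.log (1 - f)| + |Real.log (1 + r ω)|) 2 P :=
    (memLp_const |Real.log (1 - f)|).add hL.abs
  apply hg.of_le
  · exact (Real.measurable_log.comp
      (measurable_const.add (measurable_const.mul hmeas))).aestronglyMeasurable
  · filter_upwards [h1] with ω hω
    have hfr : 0 < 1 + f * r ω := by nlinarith
    have hbound : |Real.log (1 + f * r ω)| ≤ |Real.log (1 - f)| + |Real.log (1 + r ω)| := by
      rcases le_total 0 (r ω) with hr | hr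
      · have h1' : 0 ≤ Real.log (1 + f * r ω) := Real.log_nonneg (by nlinarith)
        have h2' : Real.log (1 + f * r ω) ≤ Real.log (1 + r ω) :=
          Real.log_le_log hfr (by nlinarith)
        rw [abs_of_nonneg h1']
        calc Real.log (1 + f * r ω) ≤ |Real.log (1 + r ω)| :=
              h2'.trans (le_abs_self _)
          _ ≤ _ := le_add_of_nonneg_left (abs_nonneg _)
      · have h1' : Real.log (1 - f) ≤ Real.log (1 + f * r ω) :=
          Real.log_le_log (by linarith) (by nlinarith)
        have h2' : Real.log (1 + f * r ω) ≤ 0 :=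
          Real.log_nonpos (by linarith) (by nlinarith)
        have h3' : Real.log (1 - f) ≤ 0 := Real.log_nonpos (by linarith) (by linarith)
        have : |Real.log (1 + f * r ω)| ≤ |Real.log (1 - f)| := by
          rw [abs_of_nonpos h2', abs_of_nonpos h3']
          linarith
        exact this.trans (le_add_of_nonneg_right (abs_nonneg _))
    calc ‖Real.log (1 + f * r ω)‖ = |Real.log (1 + f * r ω)| := rfl
      _ ≤ |Real.log (1 - f)| + |Real.log (1 + r ω)| := hbound
      _ ≤ ‖|Real.log (1 - f)| + |Real.log (1 + r ω)|‖ := le_abs_self _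

lemma sq_sub_integrable {Ω : Type*} [MeasurableSpace Ω] {P : Measure Ω} [IsProbabilityMeasure P]
    {X : Ω → ℝ} (hX : MemLp X 2 P) :
    Integrable (fun z : Ω × Ω => (X z.1 - X z.2) ^ 2) (P.prod P) := by
  have hXi : Integrable X P := hX.integrable one_le_two
  have hX2 : Integrable (fun ω => X ω ^ 2) P := hX.integrable_sq
  have hA : Integrable (fun z : Ω × Ω => X z.1 ^ 2 * (1:ℝ)) (P.prod P) :=
    hX2.mul_prod (integrable_const 1)
  have hB : Integrable (fun z : Ω × Ω => X z.1 * X z.2) (P.prod P) := hXi.mul_prod hXi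
  have hC : Integrable (fun z : Ω × Ω => (1:ℝ) * X z.2 ^ 2) (P.prod P) :=
    (integrable_const 1).mul_prod hX2
  have := (hA.sub (hB.const_mul 2)).add hC
  apply this.congr
  filter_upwards with z
  simp only [Pi.add_apply, Pi.sub_apply]
  ring

lemma variance_eq_half_integral {Ω : Type*} [MeasurableSpace Ω] (P : Measure Ω)
    [IsProbabilityMeasure P] {X : Ω → ℝ} (hX : MemLp X 2 P) :
    variance X P = (1/2) * ∫ z, (X z.1 - X z.2) ^ 2 ∂(P.prod P) := by
  have hXi : Integrable X P := hX.integrable one_le_two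
  have hX2 : Integrable (fun ω => X ω ^ 2) P := hX.integrable_sq
  have hA : Integrable (fun z : Ω × Ω => X z.1 ^ 2 * (1:ℝ)) (P.prod P) :=
    hX2.mul_prod (integrable_const 1)
  have hB : Integrable (fun z : Ω × Ω => X z.1 * X z.2) (P.prod P) := hXi.mul_prod hXi
  have hC : Integrable (fun z : Ω × Ω => (1:ℝ) * X z.2 ^ 2) (P.prod P) :=
    (integrable_const 1).mul_prod hX2
  have hsplit : ∫ z, (X z.1 - X z.2) ^ 2 ∂(P.prod P)
      = ∫ z, (X z.1 ^ 2 * (1:ℝ) - 2 * (X z.1 * X z.2) + (1:ℝ) * X z.2 ^ 2) ∂(P.prod P) := by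
    congr 1; funext z; ring
  have hB2 : Integrable (fun z : Ω × Ω => 2 * (X z.1 * X z.2)) (P.prod P) := hB.const_mul 2
  have hAB : Integrable (fun z : Ω × Ω => X z.1 ^ 2 * (1:ℝ) - 2 * (X z.1 * X z.2)) (P.prod P) :=
    hA.sub hB2
  rw [variance_eq_sub hX, hsplit, integral_add hAB hC,
    integral_sub hA hB2, integral_prod_mul (fun ω => X ω ^ 2) (fun _ => (1:ℝ)),
    integral_const_mul, integral_prod_mul X X,
    integral_prod_mul (fun _ => (1:ℝ)) (fun ω => X ω ^ 2)]
  have hone : ∫ _ : Ω, (1:ℝ) ∂P = 1 := by simp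
  rw [hone]
  simp only [Pi.pow_apply]
  ring
/-- Under the standing assumptions on the return `r`,
the asymptotic variance `υ_r(f) = Var[log(1 + f r)]` is strictly increasing on `(0,1)`. -/
theorem asymptotic_variance_strictMonoOn
    {Ω : Type*} [MeasurableSpace Ω] (P : Measure Ω) [IsProbabilityMeasure P]
    (r : Ω → ℝ) (hmeas : Measurable r)
    (h1 : ∀ᵐ ω ∂P, -1 ≤ r ω)
    (hpos : 0 < P {ω | 0 < r ω})
    (hneg : 0 < P {ω | r ω < 0})
    (hsq : Integrable (fun ω => (Real.log (1 + r ω)) ^ 2) P) :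
    StrictMonoOn
      (fun f => variance (fun ω => Real.log (1 + f * r ω)) P)
      (Set.Ioo (0 : ℝ) 1) := by
  intro f1 hf1 f2 hf2 hlt
  have hX1 : MemLp (fun ω => Real.log (1 + f1 * r ω)) 2 P :=
    memL2_log P r hmeas h1 hsq hf1.1.le hf1.2
  have hX2 : MemLp (fun ω => Real.log (1 + f2 * r ω)) 2 P :=
    memL2_log P r hmeas h1 hsq hf2.1.le hf2.2
  show variance (fun ω => Real.log (1 + f1 * r ω)) P
      < variance (fun ω => Real.log (1 + f2 * r ω)) P
  rw [variance_eq_half_integral P hX1, variance_eq_half_integral P hX2]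
  have hi1 : Integrable
      (fun z : Ω × Ω => (Real.log (1 + f1 * r z.1) - Real.log (1 + f1 * r z.2)) ^ 2)
      (P.prod P) := sq_sub_integrable hX1
  have hi2 : Integrable
      (fun z : Ω × Ω => (Real.log (1 + f2 * r z.1) - Real.log (1 + f2 * r z.2)) ^ 2)
      (P.prod P) := sq_sub_integrable hX2
  have hae1 : ∀ᵐ z ∂(P.prod P), -1 ≤ r z.1 :=
    MeasureTheory.Measure.quasiMeasurePreserving_fst.ae h1
  have hae2 : ∀ᵐ z ∂(P.prod P), -1 ≤ r z.2 :=
    MeasureTheory.Measure.quasiMeasurePreserving_snd.ae h1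
  have hnonneg : ∀ᵐ z ∂(P.prod P), 0 ≤
      (Real.log (1 + f2 * r z.1) - Real.log (1 + f2 * r z.2)) ^ 2
      - (Real.log (1 + f1 * r z.1) - Real.log (1 + f1 * r z.2)) ^ 2 := by
    filter_upwards [hae1, hae2] with z hz1 hz2
    have := sq_diff_mono hz1 hz2 hf1.1.le hlt.le hf2.2
    linarith
  have key : 0 < ∫ z, ((Real.log (1 + f2 * r z.1) - Real.log (1 + f2 * r z.2)) ^ 2
      - (Real.log (1 + f1 * r z.1) - Real.log (1 + f1 * r z.2)) ^ 2) ∂(P.prod P) := by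
    rcases lt_or_ge 0 (∫ z, ((Real.log (1 + f2 * r z.1) - Real.log (1 + f2 * r z.2)) ^ 2
      - (Real.log (1 + f1 * r z.1) - Real.log (1 + f1 * r z.2)) ^ 2) ∂(P.prod P)) with h | h
    · exact h
    exfalso
    have hzero := le_antisymm h (integral_nonneg_of_ae hnonneg)
    have hgz := (integral_eq_zero_iff_of_nonneg_ae hnonneg (hi2.sub hi1)).mp hzero
    have hSnull : ∀ᵐ z ∂(P.prod P), ¬(0 < r z.1 ∧ r z.2 < 0) := by
      filter_upwards [hae2, hgz] with z hz2 hz0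
      rintro ⟨hp, hn⟩
      have := sq_diff_strict hp hz2 hn hf1.1 hlt hf2.2
      simp only [Pi.zero_apply] at hz0
      linarith
    rw [ae_iff] at hSnull
    have hset : {z : Ω × Ω | ¬¬(0 < r z.1 ∧ r z.2 < 0)}
        = {ω | 0 < r ω} ×ˢ {ω | r ω < 0} := by
      ext z; simp [Set.mem_prod]
    rw [hset, Measure.prod_prod] at hSnull
    exact (ENNReal.mul_pos hpos.ne' hneg.ne').ne' hSnull
  rw [integral_sub hi2 hi1] at key
  have : (0:ℝ) < 1/2 := by norm_num
  nlinarith
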